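/- Let R be η-averaged with η ∈ (0,1), θ ∈ (0, (1−η)/η), and set μ = η(1+θ). Then the composition R_θ := R ∘ ((1+θ)R − θ·Id) is ν-averaged with ν = (η + μ − 2ημ)/(1 − ημ), and ν ∈ (0,1). -/

import Mathlib

open scoped RealInnerProductSpace

/-- `Q` is nonexpansive. -/
def Nonexpansive {H : Type*} [NormedAddCommGroup H] (Q : H → H) : Prop :=
  ∀ x y, ‖Q x - Q y‖ ≤ ‖x - y‖

/-- `R` is `α`-averaged: `R = (1-α)•Id + α•Q` for some nonexpansive `Q`. -/
def IsAveraged {H : Type*} [NormedAddCommGroup H] [InnerProductSpace ℝ H]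
    (α : ℝ) (R : H → H) : Prop :=
  ∃ Q : H → H, Nonexpansive Q ∧ ∀ x, R x = (1 - α) • x + α • Q x

lemma harm_id {a b : ℝ} (ha : 0 < a) (ha' : a < 1) (hb : 0 < b) (hb' : b < 1) :
    (a + b - 2 * a * b) / (1 - a * b) * ((1 - a) / a * ((1 - b) / b) / ((1 - a) / a + (1 - b) / b))
      = 1 - (a + b - 2 * a * b) / (1 - a * b) := by
  have h3 : (1 : ℝ) - a * b ≠ 0 := by nlinarith
  have hn : a + b - 2 * a * b ≠ 0 := by nlinarith
  have e1 : (1 - a) / a + (1 - b) / b = (a + b - 2 * a * b) / (a * b) := by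
    field_simp; ring
  rw [e1]
  field_simp
  have hn' : a + b - a * b * 2 ≠ 0 := by nlinarith
  field_simp
  ring

section Aux

variable {H : Type*} [NormedAddCommGroup H] [InnerProductSpace ℝ H]

/-- An `α`-averaged map with `0 ≤ α` satisfies `‖Tx - Ty - (1-α)(x-y)‖ ≤ α‖x-y‖`. -/
lemma averaged_bound {α : ℝ} {T : H → H} (hα : 0 ≤ α) (h : IsAveraged α T) (x y : H) :
    ‖T x - T y - (1 - α) • (x - y)‖ ≤ α * ‖x - y‖ := by
  obtain ⟨Q, hQ, hT⟩ := h
  have key : T x - T y - (1 - α) • (x - y) = α • (Q x - Q y) := by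
    rw [hT x, hT y]; module
  rw [key, norm_smul, Real.norm_eq_abs, abs_of_nonneg hα]
  exact mul_le_mul_of_nonneg_left (hQ x y) hα

/-- Converse: the pointwise bound implies averagedness, for `0 < α`. -/
lemma averaged_of_bound {α : ℝ} {T : H → H} (hα : 0 < α)
    (h : ∀ x y, ‖T x - T y - (1 - α) • (x - y)‖ ≤ α * ‖x - y‖) :
    IsAveraged α T := by
  refine ⟨fun x => α⁻¹ • (T x - (1 - α) • x), ?_, ?_⟩
  · intro x y
    have key : α⁻¹ • (T x - (1 - α) • x) - α⁻¹ • (T y - (1 - α) • y)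
        = α⁻¹ • (T x - T y - (1 - α) • (x - y)) := by module
    rw [key, norm_smul, Real.norm_eq_abs, abs_of_nonneg (inv_nonneg.2 hα.le)]
    calc α⁻¹ * ‖T x - T y - (1 - α) • (x - y)‖ ≤ α⁻¹ * (α * ‖x - y‖) :=
          mul_le_mul_of_nonneg_left (h x y) (inv_nonneg.2 hα.le)
      _ = ‖x - y‖ := by field_simp
  · intro x
    rw [smul_smul, mul_inv_cancel₀ hα.ne', one_smul]
    abel

set_option maxHeartbeats 2000000 in
/-- Composition rule for averaged operators. -/
lemma averaged_comp {α₁ α₂ : ℝ} {T₁ T₂ : H → H}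
    (h1 : α₁ ∈ Set.Ioo (0 : ℝ) 1) (h2 : α₂ ∈ Set.Ioo (0 : ℝ) 1)
    (hT₁ : IsAveraged α₁ T₁) (hT₂ : IsAveraged α₂ T₂) :
    (α₁ + α₂ - 2 * α₁ * α₂) / (1 - α₁ * α₂) ∈ Set.Ioo (0 : ℝ) 1 ∧
      IsAveraged ((α₁ + α₂ - 2 * α₁ * α₂) / (1 - α₁ * α₂)) (fun x => T₁ (T₂ x)) := by
  obtain ⟨ha1, ha1'⟩ := h1
  obtain ⟨ha2, ha2'⟩ := h2
  set α : ℝ := (α₁ + α₂ - 2 * α₁ * α₂) / (1 - α₁ * α₂) with hαdef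
  have hden : 0 < 1 - α₁ * α₂ := by nlinarith
  have hnum : 0 < α₁ + α₂ - 2 * α₁ * α₂ := by nlinarith
  have hα0 : 0 < α := div_pos hnum hden
  have hα1 : α < 1 := by
    rw [hαdef, div_lt_one hden]; nlinarith
  refine ⟨⟨hα0, hα1⟩, ?_⟩
  apply averaged_of_bound hα0
  intro x y
  set u : H := x - y with hu
  set v : H := T₂ x - T₂ y with hv
  set w : H := T₁ (T₂ x) - T₁ (T₂ y) with hw
  have b1 : ‖w - (1 - α₁) • v‖ ≤ α₁ * ‖v‖ := averaged_bound ha1.le hT₁ (T₂ x) (T₂ y)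
  have b2 : ‖v - (1 - α₂) • u‖ ≤ α₂ * ‖u‖ := averaged_bound ha2.le hT₂ x y
  have sq1 : ‖w - (1 - α₁) • v‖ ^ 2 ≤ α₁ ^ 2 * ‖v‖ ^ 2 := by
    have := mul_self_le_mul_self (norm_nonneg _) b1
    nlinarith
  have sq2 : ‖v - (1 - α₂) • u‖ ^ 2 ≤ α₂ ^ 2 * ‖u‖ ^ 2 := by
    have := mul_self_le_mul_self (norm_nonneg _) b2
    nlinarith
  set W := ‖w‖ ^ 2
  set V := ‖v‖ ^ 2
  set U := ‖u‖ ^ 2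
  set p := ⟪w, v⟫
  set q := ⟪v, u⟫
  set r := ⟪w, u⟫
  have e1 : ‖w - (1 - α₁) • v‖ ^ 2 = W - 2 * (1 - α₁) * p + (1 - α₁) ^ 2 * V := by
    rw [norm_sub_sq_real, inner_smul_right, norm_smul]
    simp [Real.norm_eq_abs, mul_pow, sq_abs]; ring
  have e2 : ‖v - (1 - α₂) • u‖ ^ 2 = V - 2 * (1 - α₂) * q + (1 - α₂) ^ 2 * U := by
    rw [norm_sub_sq_real, inner_smul_right, norm_smul]
    simp [Real.norm_eq_abs, mul_pow, sq_abs]; ring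
  have s1pos : 0 < (1 - α₁) / α₁ := div_pos (by linarith) ha1
  have s2pos : 0 < (1 - α₂) / α₂ := div_pos (by linarith) ha2
  have nvw : ‖v - w‖ ^ 2 = V - 2 * p + W := by
    rw [norm_sub_sq_real, real_inner_comm]
  have nuv : ‖u - v‖ ^ 2 = U - 2 * q + V := by
    rw [norm_sub_sq_real, real_inner_comm]
  have nuw : ‖u - w‖ ^ 2 = U - 2 * r + W := by
    rw [norm_sub_sq_real, real_inner_comm]
  have step1 : W + (1 - α₁) / α₁ * ‖v - w‖ ^ 2 ≤ V := by
    rw [nvw, div_mul_eq_mul_div, add_div' _ _ _ ha1.ne', div_le_iff₀ ha1]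
    rw [e1] at sq1
    nlinarith
  have step2 : V + (1 - α₂) / α₂ * ‖u - v‖ ^ 2 ≤ U := by
    rw [nuv, div_mul_eq_mul_div, add_div' _ _ _ ha2.ne', div_le_iff₀ ha2]
    rw [e2] at sq2
    nlinarith
  set s₁ := (1 - α₁) / α₁ with hs₁
  set s₂ := (1 - α₂) / α₂ with hs₂
  set s := s₁ * s₂ / (s₁ + s₂) with hs
  have hs12 : 0 < s₁ + s₂ := by positivity
  have step3 : s * ‖u - w‖ ^ 2 ≤ s₂ * ‖u - v‖ ^ 2 + s₁ * ‖v - w‖ ^ 2 := by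
    have expand2 : ‖u - w‖ ^ 2 = ‖u - v‖ ^ 2 + 2 * ⟪u - v, v - w⟫ + ‖v - w‖ ^ 2 := by
      have h0 : u - w = (u - v) + (v - w) := by abel
      rw [h0, norm_add_sq_real]
    have key : 0 ≤ ‖s₂ • (u - v) - s₁ • (v - w)‖ ^ 2 := sq_nonneg _
    have expand : ‖s₂ • (u - v) - s₁ • (v - w)‖ ^ 2
        = s₂ ^ 2 * ‖u - v‖ ^ 2 - 2 * s₂ * s₁ * ⟪u - v, v - w⟫ + s₁ ^ 2 * ‖v - w‖ ^ 2 := by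
      rw [norm_sub_sq_real, inner_smul_left, inner_smul_right, norm_smul, norm_smul]
      simp [Real.norm_eq_abs, mul_pow, sq_abs]; ring
    rw [expand] at key
    rw [expand2, hs, div_mul_eq_mul_div, div_le_iff₀ hs12]
    linarith [key]
  have comb : W + s * ‖u - w‖ ^ 2 ≤ U := by linarith
  rw [nuw] at comb
  have hαs : α * s = 1 - α := by
    rw [hs, hs₁, hs₂, hαdef]
    exact harm_id ha1 ha1' ha2 ha2'
  have lin : α * W + (1 - α) * (U - 2 * r + W) ≤ α * U := by
    calc α * W + (1 - α) * (U - 2 * r + W) = α * (W + s * (U - 2 * r + W)) := by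
          rw [← hαs]; ring
      _ ≤ α * U := mul_le_mul_of_nonneg_left comb hα0.le
  have egoal : ‖w - (1 - α) • u‖ ^ 2 = W - 2 * (1 - α) * r + (1 - α) ^ 2 * U := by
    rw [norm_sub_sq_real, inner_smul_right, norm_smul]
    simp [Real.norm_eq_abs, mul_pow, sq_abs]; ring
  have hU : U = ‖u‖ ^ 2 := rfl
  clear_value u v w W V U p q r s₁ s₂ s α
  have sqgoal : ‖w - (1 - α) • u‖ ^ 2 ≤ (α * ‖u‖) ^ 2 := by
    rw [egoal, mul_pow, ← hU]
    nlinarith [lin]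
  have final : ‖w - (1 - α) • u‖ ≤ α * ‖u‖ := by
    nlinarith [norm_nonneg (w - (1 - α) • u), mul_nonneg hα0.le (norm_nonneg u), sqgoal]
  exact final

end Aux

/-- Let `R` be `η`-averaged, `θ ∈ (0,(1−η)/η)`, `μ = η(1+θ)`. Then
`R_θ = R ∘ ((1+θ)R − θ·Id)` is `ν`-averaged with `ν = (η+μ−2ημ)/(1−ημ) ∈ (0,1)`. -/
theorem averaged_composition_overrelaxation
    {H : Type*} [NormedAddCommGroup H] [InnerProductSpace ℝ H]
    (R : H → H) (η θ : ℝ) (hη : η ∈ Set.Ioo (0 : ℝ) 1)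
    (hθ : θ ∈ Set.Ioo (0 : ℝ) ((1 - η) / η))
    (hR : IsAveraged η R) (μ ν : ℝ) (hμ : μ = η * (1 + θ))
    (hν : ν = (η + μ - 2 * η * μ) / (1 - η * μ)) :
    ν ∈ Set.Ioo (0 : ℝ) 1 ∧
      IsAveraged ν (fun x => R ((1 + θ) • R x - θ • x)) := by
  obtain ⟨hη0, hη1⟩ := hη
  obtain ⟨hθ0, hθ1⟩ := hθ
  have hθη : θ * η < 1 - η := by rwa [lt_div_iff₀ hη0] at hθ1
  have hμIoo : μ ∈ Set.Ioo (0 : ℝ) 1 := by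
    constructor
    · rw [hμ]; positivity
    · rw [hμ]; nlinarith
  have hT₂ : IsAveraged μ (fun x => (1 + θ) • R x - θ • x) := by
    obtain ⟨Q, hQ, hRx⟩ := hR
    refine ⟨Q, hQ, fun x => ?_⟩
    show (1 + θ) • R x - θ • x = (1 - μ) • x + μ • Q x
    rw [hRx x, hμ]
    module
  have := averaged_comp (H := H) ⟨hη0, hη1⟩ hμIoo hR hT₂
  rw [hν]
  exact this
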